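/- Entropy upper bound via ball probabilities (single-shot achievability): H_X(d,0) ≤ R_X⁺(d,0) + log₂(R_X⁺(d,0) + 1) + log₂ e bits, where H_X(d,0) is the minimal entropy of a deterministic quantizer meeting distortion d almost surely, and R_X⁺(d,0) = inf_Q E[-log₂ Q(B_d(X))]. -/

import Mathlib

noncomputable section

/-- `q` is a probability mass function on the finite alphabet `α`. -/
def isPMF {α : Type*} [Fintype α] (q : α → ℝ) : Prop :=
  (∀ a, 0 ≤ q a) ∧ ∑ a, q a = 1

/-- Shannon entropy (in bits) of a pmf on a finite alphabet. -/
def ent {α : Type*} [Fintype α] (q : α → ℝ) : ℝ :=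
  ∑ a, -(q a * Real.logb 2 (q a))

/-- Relative entropy (Kullback–Leibler divergence, in bits) between pmfs. -/
def klDiv {α : Type*} [Fintype α] (μ ν : α → ℝ) : ℝ :=
  ∑ a, μ a * Real.logb 2 (μ a / ν a)

/-- Probability, under `Q`, of the distortion-`D` ball around `x`:
`Q(B_D(x)) = Q {y : df x y ≤ D}`. -/
def probBall {X Y : Type*} [Fintype Y] (Q : Y → ℝ) (df : X → Y → ℝ) (D : ℝ) (x : X) : ℝ :=
  ∑ y, if df x y ≤ D then Q y else 0

/-- Output marginal `P_Y` induced by input pmf `p` and kernel `K`. -/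
def marg {X Y : Type*} [Fintype X] [Fintype Y] (p : X → ℝ) (K : X → Y → ℝ) : Y → ℝ :=
  fun y => ∑ x, p x * K x y

/-- Mutual information (in bits) `I(X;Y)` of the joint law `p ⊗ K`,
written as `E_X [ D(K(X) ‖ P_Y) ]`. -/
def mutInfo {X Y : Type*} [Fintype X] [Fintype Y] (p : X → ℝ) (K : X → Y → ℝ) : ℝ :=
  ∑ x, p x * klDiv (K x) (marg p K)

/-- Binary relative entropy `d(α‖q)` (in bits). -/
def bdiv (a q : ℝ) : ℝ :=
  a * Real.logb 2 (a / q) + (1 - a) * Real.logb 2 ((1 - a) / (1 - q))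

set_option linter.unusedSectionVars false
set_option maxHeartbeats 1000000

namespace GEUB

open Finset Real











variable {X Y : Type*} [Fintype X] [Fintype Y]

lemma wsum_le (p A B : X → ℝ) (hp : ∀ x, 0 ≤ p x) (h : ∀ x, 0 < p x → A x ≤ B x) :
    ∑ x, p x * A x ≤ ∑ x, p x * B x := by
  apply Finset.sum_le_sum
  intro x _
  rcases eq_or_lt_of_le (hp x) with h0 | h0
  · simp [← h0]
  · exact mul_le_mul_of_nonneg_left (h x h0) (hp x)

lemma push_sum [DecidableEq Y] (p : X → ℝ) (f : X → Y) (g : Y → ℝ) :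
    ∑ y, (∑ x, if f x = y then p x else 0) * g y = ∑ x, p x * g (f x) := by
  simp only [Finset.sum_mul, ite_mul, zero_mul]
  rw [Finset.sum_comm]
  apply Finset.sum_congr rfl
  intro x _
  simp [Finset.sum_ite_eq' Finset.univ (f x) (fun y => p x * g y)]

lemma pushforward_isPMF [DecidableEq Y] (p : X → ℝ) (hp : isPMF p) (f : X → Y) :
    isPMF (fun y => ∑ x, if f x = y then p x else 0) := by
  constructor
  · intro y
    apply Finset.sum_nonneg
    intro x _
    split <;> simp [hp.1 x]
  · rw [Finset.sum_comm]
    calc ∑ x, ∑ y, (if f x = y then p x else 0)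
        = ∑ x, p x := by
          apply Finset.sum_congr rfl
          intro x _
          simp [Finset.sum_ite_eq' Finset.univ (f x) (fun _ => p x)]
      _ = 1 := hp.2

lemma ent_nonneg (q : X → ℝ) (h0 : ∀ x, 0 ≤ q x) (h1 : ∀ x, q x ≤ 1) : 0 ≤ ent q := by
  apply Finset.sum_nonneg
  intro x _
  have : Real.logb 2 (q x) ≤ 0 := Real.logb_nonpos one_lt_two (h0 x) (h1 x)
  nlinarith [h0 x]







variable {Y : Type*} [Fintype Y]

lemma gibbs_term (P μ : ℝ) (hP : 0 ≤ P) (hμ : 0 ≤ μ) (h : 0 < P → 0 < μ) :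
    P * Real.logb 2 μ - P * Real.logb 2 P ≤ (μ - P) / Real.log 2 := by
  rcases eq_or_lt_of_le hP with h0 | h0
  · simp only [← h0, zero_mul, sub_zero, sub_self]
    positivity
  · have hμ0 := h h0
    have hlog2 : (0:ℝ) < Real.log 2 := Real.log_pos one_lt_two
    have key : Real.log (μ / P) ≤ μ / P - 1 := Real.log_le_sub_one_of_pos (by positivity)
    rw [Real.log_div (ne_of_gt hμ0) (ne_of_gt h0)] at key
    have : P * (Real.log μ - Real.log P) ≤ μ - P := by
      have := mul_le_mul_of_nonneg_left key h0.le
      calc P * (Real.log μ - Real.log P) ≤ P * (μ / P - 1) := this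
        _ = μ - P := by field_simp
    rw [Real.logb, Real.logb]
    have h3 : P * (Real.log μ - Real.log P) / Real.log 2 ≤ (μ - P) / Real.log 2 :=
      by gcongr
    calc P * (Real.log μ / Real.log 2) - P * (Real.log P / Real.log 2)
        = P * (Real.log μ - Real.log P) / Real.log 2 := by field_simp
      _ ≤ (μ - P) / Real.log 2 := h3

lemma gibbs (P μ : Y → ℝ) (hP : isPMF P) (hμ0 : ∀ y, 0 ≤ μ y) (hμ1 : ∑ y, μ y ≤ 1)
    (h : ∀ y, 0 < P y → 0 < μ y) :
    ent P ≤ ∑ y, P y * (- Real.logb 2 (μ y)) := by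
  rw [← sub_nonpos]
  have key : ∑ y, (P y * Real.logb 2 (μ y) - P y * Real.logb 2 (P y))
      ≤ ∑ y, (μ y - P y) / Real.log 2 := by
    apply Finset.sum_le_sum
    intro y _
    exact gibbs_term _ _ (hP.1 y) (hμ0 y) (h y)
  have h2 : ∑ y, (μ y - P y) / Real.log 2 ≤ 0 := by
    rw [← Finset.sum_div, Finset.sum_sub_distrib, hP.2]
    apply div_nonpos_of_nonpos_of_nonneg
    · linarith
    · exact (Real.log_pos one_lt_two).le
  calc ent P - ∑ y, P y * (-Real.logb 2 (μ y))
      = ∑ y, (P y * Real.logb 2 (μ y) - P y * Real.logb 2 (P y)) := by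
        rw [ent, ← Finset.sum_sub_distrib]
        apply Finset.sum_congr rfl
        intro y _; ring
    _ ≤ ∑ y, (μ y - P y) / Real.log 2 := key
    _ ≤ 0 := h2






variable {Y : Type*} [Fintype Y]

/-- First index (0-based) at which the codeword satisfies `P`, with its value. -/
def fh (P : Y → Prop) [DecidablePred P] : (N : ℕ) → (Fin N → Y) → Option (ℕ × Y)
  | 0, _ => none
  | N+1, c =>
    if P (c 0) then some (0, c 0)
    else (fh P N (fun i => c i.succ)).map (fun z => (z.1 + 1, z.2))

/-- Cost of the first-success search: `g i` if first success at index `i`, else `F`. -/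
def phi (P : Y → Prop) [DecidablePred P] : (N : ℕ) → (ℕ → ℝ) → ℝ → (Fin N → Y) → ℝ
  | 0, _, F, _ => F
  | N+1, g, F, c => if P (c 0) then g 0 else phi P N (fun i => g (i+1)) F (fun i => c i.succ)

lemma phi_eq_fh (P : Y → Prop) [DecidablePred P] (N : ℕ) (g : ℕ → ℝ) (F : ℝ)
    (c : Fin N → Y) :
    phi P N g F c = (fh P N c).elim F (fun z => g z.1) := by
  induction N generalizing g with
  | zero => rfl
  | succ N ih =>
    rw [phi, fh]
    by_cases h : P (c 0)
    · simp [h]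
    · simp only [h, if_false, ih]
      cases fh P N (fun i => c i.succ) <;> simp

lemma fh_spec (P : Y → Prop) [DecidablePred P] (N : ℕ) (c : Fin N → Y) (i : ℕ) (y : Y)
    (h : fh P N c = some (i, y)) : ∃ (hi : i < N), y = c ⟨i, hi⟩ ∧ P y := by
  induction N generalizing i y with
  | zero => simp [fh] at h
  | succ N ih =>
    rw [fh] at h
    by_cases hP : P (c 0)
    · simp only [hP, if_true, Option.some.injEq, Prod.mk.injEq] at h
      obtain ⟨h1, h2⟩ := h
      subst h1
      have h0 : (⟨0, Nat.succ_pos N⟩ : Fin (N+1)) = 0 := rfl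
      exact ⟨Nat.succ_pos N, by rw [h0, h2], h2 ▸ hP⟩
    · simp only [hP, if_false, Option.map_eq_some_iff] at h
      obtain ⟨⟨j, z⟩, hj, hz⟩ := h
      simp only [Prod.mk.injEq] at hz
      obtain ⟨hz1, hz2⟩ := hz
      subst hz1
      subst hz2
      obtain ⟨hjN, hzv, hPz⟩ := ih (c := fun i => c i.succ) j z hj
      refine ⟨by omega, ?_, hPz⟩
      rw [hzv]
      congr 1

/-- Sum over `Fin (N+1) → Y` via first coordinate. -/
lemma sum_pi_succ {β : Type*} [AddCommMonoid β] (N : ℕ) (f : (Fin (N+1) → Y) → β) :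
    ∑ c : Fin (N+1) → Y, f c = ∑ y : Y, ∑ c : Fin N → Y, f (Fin.cons y c) := by
  calc ∑ c : Fin (N+1) → Y, f c
      = ∑ z : Y × (Fin N → Y), f (Fin.cons z.1 z.2) := by
        apply Fintype.sum_equiv (Fin.consEquiv (fun _ => Y)).symm
        intro c
        simp [Fin.consEquiv, Fin.cons_self_tail]
    _ = ∑ y : Y, ∑ c : Fin N → Y, f (Fin.cons y c) := Fintype.sum_prod_type _

lemma sum_prod_weights (Q : Y → ℝ) (hQ : ∑ y, Q y = 1) (N : ℕ) :
    ∑ c : Fin N → Y, ∏ i, Q (c i) = 1 := by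
  induction N with
  | zero => simp
  | succ N ih =>
    rw [sum_pi_succ]
    have : ∀ (y : Y) (c : Fin N → Y), ∏ i, Q ((Fin.cons y c : Fin (N+1) → Y) i) = Q y * ∏ i, Q (c i) := by
      intro y c
      rw [Fin.prod_univ_succ]
      simp
    simp_rw [this, ← Finset.mul_sum, ih, mul_one, hQ]

/-- Expectation of `phi` under the i.i.d. codebook distribution. -/
lemma exp_phi (Q : Y → ℝ) (hQ : isPMF Q) (P : Y → Prop) [DecidablePred P]
    (N : ℕ) (g : ℕ → ℝ) (F : ℝ) :
    ∑ c : Fin N → Y, (∏ i, Q (c i)) * phi P N g F c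
      = ∑ i ∈ Finset.range N, ((∑ y, if P y then Q y else 0) * (1 - ∑ y, if P y then Q y else 0) ^ i) * g i
        + (1 - ∑ y, if P y then Q y else 0) ^ N * F := by
  set q := ∑ y, if P y then Q y else 0 with hq
  have hqc : ∑ y, (if P y then (0:ℝ) else Q y) = 1 - q := by
    rw [hq, eq_sub_iff_add_eq, ← Finset.sum_add_distrib]
    rw [← hQ.2]
    apply Finset.sum_congr rfl
    intro y _
    split <;> ring
  induction N generalizing g with
  | zero => simp [phi]
  | succ N ih =>
    rw [sum_pi_succ]
    have step : ∀ (y : Y) (c : Fin N → Y),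
        (∏ i, Q ((Fin.cons y c : Fin (N+1) → Y) i)) * phi P (N+1) g F (Fin.cons y c : Fin (N+1) → Y)
        = Q y * ((∏ i, Q (c i)) * (if P y then g 0 else phi P N (fun i => g (i+1)) F c)) := by
      intro y c
      rw [Fin.prod_univ_succ]
      simp only [Fin.cons_zero, Fin.cons_succ, phi]
      ring
    simp_rw [step, ← Finset.mul_sum]
    have split : ∀ y : Y, Q y * ∑ c : Fin N → Y, (∏ i, Q (c i)) * (if P y then g 0 else phi P N (fun i => g (i+1)) F c)
        = (if P y then Q y else 0) * g 0 + (if P y then 0 else Q y) * (∑ c : Fin N → Y, (∏ i, Q (c i)) * phi P N (fun i => g (i+1)) F c) := by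
      intro y
      by_cases h : P y
      · simp only [h, if_true, ← Finset.sum_mul, sum_prod_weights Q hQ.2 N]
        ring
      · simp only [h, if_false]
        rw [zero_mul, zero_add, Finset.mul_sum]
    simp_rw [split]
    rw [Finset.sum_add_distrib, ← Finset.sum_mul, ← Finset.sum_mul, ← hq, hqc,
      ih (fun i => g (i+1))]
    rw [Finset.sum_range_succ' (fun i => q * (1-q)^i * g i) N]
    rw [mul_add, Finset.mul_sum]
    have harr : ∀ i ∈ Finset.range N, (1-q) * (q * (1-q)^i * g (i+1)) = q * (1-q)^(i+1) * g (i+1) := by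
      intros; ring
    rw [Finset.sum_congr rfl harr]
    ring





/-- The coding "pmf" on positive integers: `ρ i = (1-θ) (θ/2)^⌊log₂ i⌋`. -/
def rho (θ : ℝ) (i : ℕ) : ℝ := (1 - θ) * (θ / 2) ^ (Nat.log 2 i)

lemma rho_pos {θ : ℝ} (h0 : 0 < θ) (h1 : θ < 1) (i : ℕ) : 0 < rho θ i := by
  apply mul_pos (by linarith)
  positivity

lemma kraft (θ : ℝ) (m : ℕ) : ∑ i ∈ Finset.Ico 1 (2 ^ m), rho θ i = 1 - θ ^ m := by
  induction m with
  | zero => simp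
  | succ m ih =>
    have h1 : (1:ℕ) ≤ 2 ^ m := Nat.one_le_two_pow
    have h2 : (2:ℕ) ^ m ≤ 2 ^ (m + 1) := by
      apply Nat.pow_le_pow_right <;> omega
    rw [← Finset.sum_Ico_consecutive _ h1 h2, ih]
    have hconst : ∀ i ∈ Finset.Ico (2^m) (2^(m+1)), rho θ i = (1 - θ) * (θ / 2) ^ m := by
      intro i hi
      rw [Finset.mem_Ico] at hi
      rw [rho, Nat.log_eq_of_pow_le_of_lt_pow hi.1 hi.2]
    rw [Finset.sum_congr rfl hconst, Finset.sum_const, Nat.card_Ico]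
    have hcard : (2:ℕ)^(m+1) - 2^m = 2^m := by
      rw [pow_succ]
      omega
    rw [hcard, nsmul_eq_mul, div_pow]
    push_cast
    have h2m : ((2:ℝ))^m ≠ 0 := by positivity
    field_simp
    ring

lemma geom_weights_sum {q : ℝ} (hq : q ≠ 0) (N : ℕ) :
    ∑ i ∈ Finset.range N, q * (1 - q) ^ i = 1 - (1 - q) ^ N := by
  have h1 : (1 - q) ≠ 1 := by intro h; apply hq; linarith
  rw [← Finset.mul_sum, geom_sum_eq h1]
  have h2 : 1 - q - 1 ≠ 0 := by intro h; apply hq; linarith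
  field_simp
  ring

lemma mean_identity {q : ℝ} (hq : q ≠ 0) (N : ℕ) :
    ∑ i ∈ Finset.range N, (q * (1 - q) ^ i) * (i + 1)
      = (1 - (1 - q) ^ N * (1 + N * q)) / q := by
  induction N with
  | zero => simp
  | succ N ih =>
    rw [Finset.sum_range_succ, ih]
    rw [div_add' _ _ _ hq]
    congr 1
    push_cast
    ring

lemma mean_bound {q : ℝ} (hq0 : 0 < q) (hq1 : q ≤ 1) (N : ℕ) :
    ∑ i ∈ Finset.range N, (q * (1 - q) ^ i) * (i + 1) + (1 - q) ^ N ≤ 1 / q := by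
  rw [mean_identity (ne_of_gt hq0)]
  rw [div_add' _ _ _ (ne_of_gt hq0), div_le_div_iff_of_pos_right hq0]
  have hpow : 0 ≤ (1 - q) ^ N := pow_nonneg (by linarith) N
  nlinarith [mul_nonneg hpow (mul_nonneg (Nat.cast_nonneg N) hq0.le)]

lemma jensen_step {q : ℝ} (hq0 : 0 < q) (hq1 : q ≤ 1) (N : ℕ) :
    ∑ i ∈ Finset.range N, (q * (1 - q) ^ i) * Real.logb 2 (i + 1) ≤ - Real.logb 2 q := by
  have hlog2 : (0:ℝ) < Real.log 2 := Real.log_pos one_lt_two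
  set w : ℕ → ℝ := fun i => if i < N then q * (1 - q) ^ i else (1 - q) ^ N with hw
  set pt : ℕ → ℝ := fun i => if i < N then (i + 1 : ℝ) else 1 with hpt
  have hwn : ∀ i ∈ Finset.range (N+1), 0 ≤ w i := by
    intro i _
    have h1q : (0:ℝ) ≤ 1 - q := by linarith
    simp only [hw]
    split <;> positivity
  have hw1 : ∑ i ∈ Finset.range (N+1), w i = 1 := by
    rw [Finset.sum_range_succ]
    have : ∀ i ∈ Finset.range N, w i = q * (1-q)^i := by
      intro i hi
      rw [Finset.mem_range] at hi
      simp [hw, hi]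
    rw [Finset.sum_congr rfl this, geom_weights_sum (ne_of_gt hq0)]
    simp [hw]
  have hmem : ∀ i ∈ Finset.range (N+1), pt i ∈ Set.Ioi (0:ℝ) := by
    intro i _
    simp only [hpt, Set.mem_Ioi]
    split
    · positivity
    · norm_num
  have jensen := (strictConcaveOn_log_Ioi.concaveOn).le_map_sum hwn hw1 hmem
  have hpt1 : ∀ i ∈ Finset.range (N+1), (1:ℝ) ≤ pt i := by
    intro i _
    simp only [hpt]
    split
    · have : (0:ℝ) ≤ (i:ℝ) := Nat.cast_nonneg i
      linarith
    · exact le_refl 1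
  have hA : ∑ i ∈ Finset.range (N+1), w i • Real.log (pt i)
      = ∑ i ∈ Finset.range N, (q * (1 - q) ^ i) * Real.log (i + 1) := by
    rw [Finset.sum_range_succ]
    have hlast : w N • Real.log (pt N) = 0 := by simp [hw, hpt]
    rw [hlast, add_zero]
    apply Finset.sum_congr rfl
    intro i hi
    rw [Finset.mem_range] at hi
    simp [hw, hpt, hi, smul_eq_mul]
  have hBle : ∑ i ∈ Finset.range (N+1), w i • pt i ≤ 1 / q := by
    rw [Finset.sum_range_succ]
    have hlast : w N • pt N = (1 - q) ^ N := by simp [hw, hpt]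
    have hmain : ∀ i ∈ Finset.range N, w i • pt i = (q * (1 - q) ^ i) * (i + 1) := by
      intro i hi
      rw [Finset.mem_range] at hi
      simp [hw, hpt, hi, smul_eq_mul]
    rw [hlast, Finset.sum_congr rfl hmain]
    exact mean_bound hq0 hq1 N
  have hB1 : (1:ℝ) ≤ ∑ i ∈ Finset.range (N+1), w i • pt i := by
    rw [← hw1]
    apply Finset.sum_le_sum
    intro i hi
    rw [smul_eq_mul]
    exact le_mul_of_one_le_right (hwn i hi) (hpt1 i hi)
  have hlogB : Real.log (∑ i ∈ Finset.range (N+1), w i • pt i) ≤ Real.log (1 / q) :=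
    Real.log_le_log (by linarith) hBle
  have key : ∑ i ∈ Finset.range N, (q * (1 - q) ^ i) * Real.log (i + 1) ≤ Real.log (1 / q) := by
    calc ∑ i ∈ Finset.range N, (q * (1 - q) ^ i) * Real.log (i + 1)
        = ∑ i ∈ Finset.range (N+1), w i • Real.log (pt i) := hA.symm
      _ ≤ Real.log (∑ i ∈ Finset.range (N+1), w i • pt i) := jensen
      _ ≤ Real.log (1 / q) := hlogB
  calc ∑ i ∈ Finset.range N, (q * (1 - q) ^ i) * Real.logb 2 (i + 1)
      = (∑ i ∈ Finset.range N, (q * (1 - q) ^ i) * Real.log (i + 1)) / Real.log 2 := by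
        rw [Finset.sum_div]
        apply Finset.sum_congr rfl
        intro i _
        rw [Real.logb, mul_div_assoc]
    _ ≤ Real.log (1 / q) / Real.log 2 := by gcongr
    _ = - Real.logb 2 q := by
        rw [one_div, Real.log_inv, Real.logb]
        ring







lemma exists_le_expectation {Ω : Type*} [Fintype Ω] (w v : Ω → ℝ)
    (h0 : ∀ ω, 0 ≤ w ω) (h1 : ∑ ω, w ω = 1) : ∃ ω, v ω ≤ ∑ ω, w ω * v ω := by
  by_contra hcon
  push_neg at hcon
  have hne : ∃ ω, w ω ≠ 0 := by
    by_contra hz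
    push_neg at hz
    rw [Finset.sum_congr rfl (fun ω _ => hz ω)] at h1
    simp at h1
  obtain ⟨ω₀, hω₀⟩ := hne
  have hlt : ∑ ω, w ω * (∑ ω', w ω' * v ω') < ∑ ω, w ω * v ω := by
    apply Finset.sum_lt_sum
    · intro ω _
      exact mul_le_mul_of_nonneg_left (hcon ω).le (h0 ω)
    · exact ⟨ω₀, Finset.mem_univ ω₀, by
        have := lt_of_le_of_ne (h0 ω₀) (Ne.symm hω₀)
        exact mul_lt_mul_of_pos_left (hcon ω₀) this⟩
  rw [← Finset.sum_mul, h1, one_mul] at hlt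
  exact lt_irrefl _ hlt

lemma natlog_le_logb (i : ℕ) : (Nat.log 2 (i+1) : ℝ) ≤ Real.logb 2 (i+1) := by
  have h2 : 2 ^ (Nat.log 2 (i+1)) ≤ i + 1 := Nat.pow_log_le_self 2 (Nat.succ_ne_zero i)
  have hcast : ((2:ℝ)) ^ (Nat.log 2 (i+1)) ≤ (i + 1 : ℝ) := by exact_mod_cast h2
  calc (Nat.log 2 (i+1) : ℝ) = Real.logb 2 ((2:ℝ) ^ (Nat.log 2 (i+1))) := by
        rw [Real.logb_pow, Real.logb_self_eq_one one_lt_two, mul_one]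
    _ ≤ Real.logb 2 (i+1) := by
        apply (Real.logb_le_logb one_lt_two (by positivity) (by positivity)).mpr hcast

variable {X Y : Type*} [Fintype X] [Fintype Y]

lemma probBall_le_one {Q : Y → ℝ} (hQ : isPMF Q) (df : X → Y → ℝ) (D : ℝ) (x : X) :
    probBall Q df D x ≤ 1 := by
  rw [probBall, ← hQ.2]
  apply Finset.sum_le_sum
  intro y _
  split
  · exact le_refl _
  · exact hQ.1 y

lemma pmf_le_one (p : X → ℝ) (hp : isPMF p) (x : X) : p x ≤ 1 := by
  rw [← hp.2]
  exact Finset.single_le_sum (fun x _ => hp.1 x) (Finset.mem_univ x)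

lemma perQ [Nonempty Y] [DecidableEq Y]
    (p : X → ℝ) (df : X → Y → ℝ) (D : ℝ) (hp : isPMF p)
    (hball : ∀ x, 0 < p x → ∃ y, df x y ≤ D)
    (Q : Y → ℝ) (hQ : isPMF Q)
    (hQpos : ∀ x, 0 < p x → 0 < probBall Q df D x)
    (θ : ℝ) (hθ0 : 0 < θ) (hθ1 : θ < 1) (ε : ℝ) (hε : 0 < ε) :
    sInf {r : ℝ | ∃ f : X → Y, (∀ x, 0 < p x → df x (f x) ≤ D) ∧
        r = ent (fun y => ∑ x, if f x = y then p x else 0)}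
      ≤ (1 + Real.logb 2 θ⁻¹) * (∑ x, p x * (- Real.logb 2 (probBall Q df D x)))
        + Real.logb 2 (1-θ)⁻¹ + ε := by
  have hθinv1 : 1 ≤ θ⁻¹ := one_le_inv_iff₀.mpr ⟨hθ0, hθ1.le⟩
  have hcθ0 : 0 ≤ Real.logb 2 θ⁻¹ := Real.logb_nonneg one_lt_two hθinv1
  have hc20 : 0 < 1 + Real.logb 2 θ⁻¹ := by linarith
  have hc10 : 0 ≤ Real.logb 2 (1-θ)⁻¹ :=
    Real.logb_nonneg one_lt_two (one_le_inv_iff₀.mpr ⟨by linarith, by linarith⟩)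
  have hpx1 : ∀ x, p x ≤ 1 := pmf_le_one p hp
  have hqb1 : ∀ x, probBall Q df D x ≤ 1 := probBall_le_one hQ df D
  have hqb0 : ∀ x, 0 ≤ probBall Q df D x := by
    intro x
    apply Finset.sum_nonneg
    intro y _
    split
    · exact hQ.1 y
    · exact le_refl 0
  -- KK := entropy-like constant
  set KK : ℝ := ∑ x, p x * (- Real.logb 2 (p x)) with hKK
  have hKK0 : 0 ≤ KK := by
    apply Finset.sum_nonneg
    intro x _
    rcases eq_or_lt_of_le (hp.1 x) with h | h
    · simp [← h]
    · have := Real.logb_nonpos one_lt_two (hp.1 x) (hpx1 x)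
      nlinarith
  -- support minimum of ball probabilities
  have hsupp : ∃ x₀ : X, 0 < p x₀ := by
    by_contra hz
    push_neg at hz
    have : ∑ x, p x = 0 :=
      Finset.sum_eq_zero (fun x _ => le_antisymm (hz x) (hp.1 x))
    rw [hp.2] at this
    norm_num at this
  have hXne : Nonempty X := ⟨hsupp.choose⟩
  obtain ⟨x₀, hx₀mem, hx₀min⟩ := Finset.exists_min_image
    (Finset.univ.filter (fun x => 0 < p x)) (fun x => probBall Q df D x)
    ⟨hsupp.choose, by simp [hsupp.choose_spec]⟩
  rw [Finset.mem_filter] at hx₀mem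
  set δ : ℝ := 1 - probBall Q df D x₀ with hδ
  have hδ0 : 0 ≤ δ := by rw [hδ]; linarith [hqb1 x₀]
  have hδ1 : δ < 1 := by rw [hδ]; linarith [hQpos x₀ hx₀mem.2]
  have hδx : ∀ x, 0 < p x → 1 - probBall Q df D x ≤ δ := by
    intro x hx
    rw [hδ]
    have := hx₀min x (Finset.mem_filter.mpr ⟨Finset.mem_univ x, hx⟩)
    linarith
  -- choose m
  have htend : Filter.Tendsto
      (fun m : ℕ => δ ^ m * (Real.logb 2 θ⁻¹ * m + KK)) Filter.atTop (nhds 0) := by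
    have h1 : Filter.Tendsto (fun m : ℕ => (m:ℝ)^1 * δ ^ m) Filter.atTop (nhds 0) :=
      (summable_pow_mul_geometric_of_norm_lt_one (R := ℝ) 1
        (by rw [Real.norm_eq_abs, abs_of_nonneg hδ0]; exact hδ1)).tendsto_atTop_zero
    have h2 : Filter.Tendsto (fun m : ℕ => δ ^ m) Filter.atTop (nhds 0) :=
      tendsto_pow_atTop_nhds_zero_of_lt_one hδ0 hδ1
    have h3 := ((h1.const_mul (Real.logb 2 θ⁻¹)).add (h2.const_mul KK))
    simp only [mul_zero, add_zero] at h3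
    apply h3.congr
    intro m
    ring
  obtain ⟨m, hmε⟩ := ((htend.eventually_lt_const hε)).exists
  -- codebook length
  set N : ℕ := 2 ^ m - 1 with hN
  have hN1 : N + 1 = 2 ^ m := by
    have : (1:ℕ) ≤ 2 ^ m := Nat.one_le_two_pow
    omega
  have hmN : m ≤ N := by
    have := @Nat.lt_two_pow_self m
    omega
  -- fallback decoder
  set y0 : X → Y := fun x => if h : 0 < p x then (hball x h).choose else Classical.arbitrary Y
    with hy0
  have hy0d : ∀ x, 0 < p x → df x (y0 x) ≤ D := by
    intro x hx
    rw [hy0]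
    simp only [hx, dif_pos]
    exact (hball x hx).choose_spec
  set ν : Y → ℝ := fun y => ∑ x, if y0 x = y then p x else 0 with hν
  have hνpmf : isPMF ν := pushforward_isPMF p hp y0
  have hνle : ∀ x, p x ≤ ν (y0 x) := by
    intro x
    have step : (if y0 x = y0 x then p x else 0) ≤ ∑ x', if y0 x' = y0 x then p x' else 0 :=
      Finset.single_le_sum (f := fun x' => if y0 x' = y0 x then p x' else 0)
        (fun x' _ => by split <;> simp [hp.1 x']) (Finset.mem_univ x)
    simp only [if_pos rfl] at step
    exact step
  -- decoder and reference measure for a codebook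
  set g : ℕ → ℝ := fun i => - Real.logb 2 (rho θ (i+1)) with hg
  set Fx : X → ℝ := fun x => - Real.logb 2 (θ ^ m * p x) with hFx
  set fdec : (Fin N → Y) → X → Y :=
    fun c x => ((fh (fun y => df x y ≤ D) N c).elim (y0 x) (fun z => z.2)) with hfdec
  set μ : (Fin N → Y) → Y → ℝ :=
    fun c y => (∑ j : Fin N, if c j = y then rho θ (j.1+1) else 0) + θ ^ m * ν y with hμ
  have hμ0 : ∀ c y, 0 ≤ μ c y := by
    intro c y
    rw [hμ]
    have h1 : (0:ℝ) ≤ ∑ j : Fin N, if c j = y then rho θ (j.1+1) else 0 := by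
      apply Finset.sum_nonneg
      intro j _
      split
      · exact (rho_pos hθ0 hθ1 _).le
      · exact le_refl 0
    have h2 : (0:ℝ) ≤ θ ^ m * ν y := by
      apply mul_nonneg (by positivity) (hνpmf.1 y)
    exact add_nonneg h1 h2
  have hμsum : ∀ c, ∑ y, μ c y = 1 := by
    intro c
    simp only [hμ]
    rw [Finset.sum_add_distrib]
    have h1 : ∑ y, ∑ j : Fin N, (if c j = y then rho θ (j.1+1) else 0)
        = ∑ j : Fin N, rho θ (j.1+1) := by
      rw [Finset.sum_comm]
      apply Finset.sum_congr rfl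
      intro j _
      rw [Finset.sum_ite_eq _ (c j) (fun _ => rho θ (j.1+1))]
      simp
    have h2 : ∑ j : Fin N, rho θ (j.1+1) = 1 - θ ^ m := by
      rw [Fin.sum_univ_eq_sum_range (fun j => rho θ (j+1)) N]
      have h3 : ∑ j ∈ Finset.range N, rho θ (j+1) = ∑ k ∈ Finset.Ico 1 (N+1), rho θ k := by
        rw [Finset.sum_Ico_eq_sum_range]
        simp only [Nat.add_sub_cancel]
        apply Finset.sum_congr rfl
        intro i _
        rw [add_comm]
      rw [h3, hN1, kraft]
    have h4 : ∑ y, θ ^ m * ν y = θ ^ m := by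
      rw [← Finset.mul_sum, hνpmf.2, mul_one]
    rw [h1, h2, h4]
    ring
  have hfd : ∀ c x, 0 < p x → df x (fdec c x) ≤ D := by
    intro c x hx
    rw [hfdec]
    rcases hfh : fh (fun y => df x y ≤ D) N c with _ | z
    · simpa [hfh] using hy0d x hx
    · obtain ⟨hi, hz, hP⟩ := fh_spec _ N c z.1 z.2 (by rw [hfh])
      simpa [hfh] using hP
  -- key pointwise bound
  have hkey : ∀ c x, 0 < p x →
      0 < μ c (fdec c x) ∧
      - Real.logb 2 (μ c (fdec c x)) ≤ phi (fun y => df x y ≤ D) N g (Fx x) c := by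
    intro c x hx
    have hsum0 : ∀ y : Y, (0:ℝ) ≤ ∑ j : Fin N, if c j = y then rho θ (j.1+1) else 0 := by
      intro y
      apply Finset.sum_nonneg
      intro j _
      split
      · exact (rho_pos hθ0 hθ1 _).le
      · exact le_refl 0
    rw [phi_eq_fh, hfdec]
    rcases hfh : fh (fun y => df x y ≤ D) N c with _ | z
    · simp only [hfh, Option.elim]
      have hθm : (0:ℝ) < θ ^ m := by positivity
      have hlb : θ ^ m * p x ≤ μ c (y0 x) := by
        simp only [hμ]
        have h2 : θ ^ m * p x ≤ θ ^ m * ν (y0 x) :=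
          mul_le_mul_of_nonneg_left (hνle x) hθm.le
        linarith [hsum0 (y0 x)]
      have hpos0 : (0:ℝ) < θ ^ m * p x := mul_pos hθm hx
      refine ⟨lt_of_lt_of_le hpos0 hlb, ?_⟩
      simp only [hFx]
      have := (Real.logb_le_logb one_lt_two hpos0 (lt_of_lt_of_le hpos0 hlb)).mpr hlb
      linarith
    · obtain ⟨hi, hzv, hP⟩ := fh_spec _ N c z.1 z.2 (by rw [hfh])
      simp only [hfh, Option.elim]
      have hρ : (0:ℝ) < rho θ (z.1+1) := rho_pos hθ0 hθ1 _
      have hlb : rho θ (z.1+1) ≤ μ c z.2 := by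
        simp only [hμ]
        have hterm : (if c ⟨z.1, hi⟩ = z.2 then rho θ ((⟨z.1, hi⟩ : Fin N).1+1) else 0)
            = rho θ (z.1+1) := by rw [if_pos hzv.symm]
        have hsingle := Finset.single_le_sum
          (f := fun j : Fin N => if c j = z.2 then rho θ (j.1+1) else 0)
          (fun j _ => by split
                         · exact (rho_pos hθ0 hθ1 _).le
                         · exact le_refl 0)
          (Finset.mem_univ (⟨z.1, hi⟩ : Fin N))
        simp only [] at hsingle
        rw [hterm] at hsingle
        have hν2 : (0:ℝ) ≤ θ ^ m * ν z.2 := mul_nonneg (by positivity) (hνpmf.1 z.2)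
        linarith
      refine ⟨lt_of_lt_of_le hρ hlb, ?_⟩
      simp only [hg]
      have := (Real.logb_le_logb one_lt_two hρ (lt_of_lt_of_le hρ hlb)).mpr hlb
      linarith
  -- Gibbs step: entropy bounded by expected cost, for each codebook
  have hgibbs : ∀ c : Fin N → Y,
      ent (fun y => ∑ x, if fdec c x = y then p x else 0)
        ≤ ∑ x, p x * (- Real.logb 2 (μ c (fdec c x))) := by
    intro c
    have hpos : ∀ y, 0 < (∑ x, if fdec c x = y then p x else 0) → 0 < μ c y := by
      intro y hy
      have hne := Finset.exists_ne_zero_of_sum_ne_zero (ne_of_gt hy)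
      obtain ⟨x, _, hx⟩ := hne
      by_cases h : fdec c x = y
      · rw [if_pos h] at hx
        have hpx : 0 < p x := lt_of_le_of_ne (hp.1 x) (Ne.symm hx)
        rw [← h]
        exact (hkey c x hpx).1
      · rw [if_neg h] at hx
        exact absurd rfl hx
    have h1 := gibbs (fun y => ∑ x, if fdec c x = y then p x else 0) (μ c)
      (pushforward_isPMF p hp (fdec c)) (hμ0 c) (le_of_eq (hμsum c)) hpos
    calc ent (fun y => ∑ x, if fdec c x = y then p x else 0)
        ≤ ∑ y, (∑ x, if fdec c x = y then p x else 0) * (- Real.logb 2 (μ c y)) := h1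
      _ = ∑ x, p x * (- Real.logb 2 (μ c (fdec c x))) :=
          push_sum p (fdec c) (fun y => - Real.logb 2 (μ c y))
  -- expectation bound
  have hexp : ∑ c : Fin N → Y, (∏ i, Q (c i)) *
        (∑ x, p x * (- Real.logb 2 (μ c (fdec c x))))
      ≤ (1 + Real.logb 2 θ⁻¹) * (∑ x, p x * (- Real.logb 2 (probBall Q df D x)))
        + Real.logb 2 (1-θ)⁻¹ + ε := by
    have hswap : ∑ c : Fin N → Y, (∏ i, Q (c i)) * (∑ x, p x * (- Real.logb 2 (μ c (fdec c x))))
        = ∑ x, p x * (∑ c : Fin N → Y, (∏ i, Q (c i)) * (- Real.logb 2 (μ c (fdec c x)))) := by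
      simp_rw [Finset.mul_sum]
      rw [Finset.sum_comm]
      apply Finset.sum_congr rfl
      intro x _
      apply Finset.sum_congr rfl
      intro c _
      ring
    have hgi : ∀ i : ℕ, g i = Real.logb 2 (1-θ)⁻¹
        + (Nat.log 2 (i+1) : ℝ) * (1 + Real.logb 2 θ⁻¹) := by
      intro i
      simp only [hg, rho]
      rw [Real.logb_mul (by intro h; linarith : (1:ℝ) - θ ≠ 0)
        (by positivity : ((θ:ℝ)/2) ^ (Nat.log 2 (i+1)) ≠ 0), Real.logb_pow,
        Real.logb_div (ne_of_gt hθ0) two_ne_zero, Real.logb_self_eq_one one_lt_two,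
        Real.logb_inv, Real.logb_inv]
      ring
    have hFxval : ∀ x, 0 < p x → Fx x = Real.logb 2 θ⁻¹ * m + (- Real.logb 2 (p x)) := by
      intro x hx
      simp only [hFx]
      rw [Real.logb_mul (by positivity : (θ:ℝ)^m ≠ 0) (ne_of_gt hx), Real.logb_pow,
        Real.logb_inv]
      ring
    have hFx0 : ∀ x, 0 < p x → 0 ≤ Fx x := by
      intro x hx
      simp only [hFx]
      have hle : θ ^ m * p x ≤ 1 := by
        calc θ ^ m * p x ≤ 1 * 1 := by
              apply mul_le_mul _ (hpx1 x) hx.le zero_le_one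
              calc θ ^ m ≤ 1 ^ m := pow_le_pow_left₀ hθ0.le hθ1.le m
                _ = 1 := one_pow m
          _ = 1 := by norm_num
      have := Real.logb_nonpos one_lt_two (by positivity : (0:ℝ) ≤ θ ^ m * p x) hle
      linarith
    have hxbound : ∀ x, 0 < p x →
        (∑ c : Fin N → Y, (∏ i, Q (c i)) * (- Real.logb 2 (μ c (fdec c x))))
          ≤ Real.logb 2 (1-θ)⁻¹ + (1 + Real.logb 2 θ⁻¹) * (- Real.logb 2 (probBall Q df D x))
            + δ ^ N * (Real.logb 2 θ⁻¹ * m + (- Real.logb 2 (p x))) := by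
      intro x hx
      set qx : ℝ := probBall Q df D x with hqx
      have hqx0 : 0 < qx := hQpos x hx
      have hqx1 : qx ≤ 1 := hqb1 x
      have step1 : (∑ c : Fin N → Y, (∏ i, Q (c i)) * (- Real.logb 2 (μ c (fdec c x))))
          ≤ ∑ c : Fin N → Y, (∏ i, Q (c i)) * phi (fun y => df x y ≤ D) N g (Fx x) c := by
        apply Finset.sum_le_sum
        intro c _
        exact mul_le_mul_of_nonneg_left ((hkey c x hx).2)
          (Finset.prod_nonneg (fun i _ => hQ.1 (c i)))
      have hqeq : (∑ y, if df x y ≤ D then Q y else 0) = qx := rfl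
      have step2 := exp_phi Q hQ (fun y => df x y ≤ D) N g (Fx x)
      rw [hqeq] at step2
      rw [step2] at step1
      -- now bound the explicit expectation
      have hA : ∑ i ∈ Finset.range N, qx * (1 - qx) ^ i ≤ 1 := by
        rw [geom_weights_sum (ne_of_gt hqx0)]
        have : (0:ℝ) ≤ (1 - qx) ^ N := pow_nonneg (by linarith) N
        linarith
      have hB : ∑ i ∈ Finset.range N, (qx * (1 - qx) ^ i) * (Nat.log 2 (i+1) : ℝ)
          ≤ - Real.logb 2 qx := by
        calc ∑ i ∈ Finset.range N, (qx * (1 - qx) ^ i) * (Nat.log 2 (i+1) : ℝ)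
            ≤ ∑ i ∈ Finset.range N, (qx * (1 - qx) ^ i) * Real.logb 2 (i+1) := by
              apply Finset.sum_le_sum
              intro i _
              apply mul_le_mul_of_nonneg_left (natlog_le_logb i)
              have : (0:ℝ) ≤ 1 - qx := by linarith
              positivity
          _ ≤ - Real.logb 2 qx := jensen_step hqx0 hqx1 N
      have hsum_split : ∑ i ∈ Finset.range N, (qx * (1 - qx) ^ i) * g i
          = Real.logb 2 (1-θ)⁻¹ * (∑ i ∈ Finset.range N, qx * (1 - qx) ^ i)
            + (1 + Real.logb 2 θ⁻¹)
              * (∑ i ∈ Finset.range N, (qx * (1 - qx) ^ i) * (Nat.log 2 (i+1) : ℝ)) := by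
        rw [Finset.mul_sum, Finset.mul_sum, ← Finset.sum_add_distrib]
        apply Finset.sum_congr rfl
        intro i _
        rw [hgi i]
        ring
      have hfall : (1 - qx) ^ N * Fx x
          ≤ δ ^ N * (Real.logb 2 θ⁻¹ * m + (- Real.logb 2 (p x))) := by
        rw [← hFxval x hx]
        apply mul_le_mul_of_nonneg_right _ (hFx0 x hx)
        exact pow_le_pow_left₀ (by linarith) (hδx x hx) N
      have hlogq : 0 ≤ - Real.logb 2 qx := by
        have := Real.logb_nonpos one_lt_two hqx0.le hqx1
        linarith
      calc (∑ c : Fin N → Y, (∏ i, Q (c i)) * (- Real.logb 2 (μ c (fdec c x))))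
          ≤ ∑ i ∈ Finset.range N, (qx * (1 - qx) ^ i) * g i + (1 - qx) ^ N * Fx x := step1
        _ ≤ Real.logb 2 (1-θ)⁻¹ * 1 + (1 + Real.logb 2 θ⁻¹) * (- Real.logb 2 qx)
            + δ ^ N * (Real.logb 2 θ⁻¹ * m + (- Real.logb 2 (p x))) := by
            rw [hsum_split]
            have t1 : Real.logb 2 (1-θ)⁻¹ * (∑ i ∈ Finset.range N, qx * (1 - qx) ^ i)
                ≤ Real.logb 2 (1-θ)⁻¹ * 1 := mul_le_mul_of_nonneg_left hA hc10
            have t2 : (1 + Real.logb 2 θ⁻¹)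
                  * (∑ i ∈ Finset.range N, (qx * (1 - qx) ^ i) * (Nat.log 2 (i+1) : ℝ))
                ≤ (1 + Real.logb 2 θ⁻¹) * (- Real.logb 2 qx) :=
              mul_le_mul_of_nonneg_left hB hc20.le
            linarith [hfall]
        _ = Real.logb 2 (1-θ)⁻¹ + (1 + Real.logb 2 θ⁻¹) * (- Real.logb 2 qx)
            + δ ^ N * (Real.logb 2 θ⁻¹ * m + (- Real.logb 2 (p x))) := by ring
    -- assemble over x
    rw [hswap]
    have hstep := wsum_le p _ _ hp.1 hxbound
    apply le_trans hstep
    have hsplit : ∀ x : X, p x * (Real.logb 2 (1-θ)⁻¹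
          + (1 + Real.logb 2 θ⁻¹) * (- Real.logb 2 (probBall Q df D x))
          + δ ^ N * (Real.logb 2 θ⁻¹ * m + (- Real.logb 2 (p x))))
        = Real.logb 2 (1-θ)⁻¹ * p x
          + (1 + Real.logb 2 θ⁻¹) * (p x * (- Real.logb 2 (probBall Q df D x)))
          + (δ ^ N * (Real.logb 2 θ⁻¹ * m)) * p x
          + δ ^ N * (p x * (- Real.logb 2 (p x))) := by
      intro x
      ring
    rw [Finset.sum_congr rfl (fun x _ => hsplit x)]
    rw [Finset.sum_add_distrib, Finset.sum_add_distrib, Finset.sum_add_distrib,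
      ← Finset.mul_sum, ← Finset.mul_sum, ← Finset.mul_sum, ← Finset.mul_sum, hp.2]
    have herr : δ ^ N * (Real.logb 2 θ⁻¹ * m) + δ ^ N * KK ≤ ε := by
      have hδN : δ ^ N ≤ δ ^ m := pow_le_pow_of_le_one hδ0 hδ1.le hmN
      have hnn : 0 ≤ Real.logb 2 θ⁻¹ * m + KK := by positivity
      have : δ ^ N * (Real.logb 2 θ⁻¹ * m + KK) ≤ δ ^ m * (Real.logb 2 θ⁻¹ * m + KK) :=
        mul_le_mul_of_nonneg_right hδN hnn
      nlinarith
    rw [← hKK]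
    nlinarith [herr]
  -- probabilistic method
  obtain ⟨c, hc⟩ := exists_le_expectation (fun c : Fin N → Y => ∏ i, Q (c i))
    (fun c => ∑ x, p x * (- Real.logb 2 (μ c (fdec c x))))
    (fun c => Finset.prod_nonneg (fun i _ => hQ.1 (c i)))
    (sum_prod_weights Q hQ.2 N)
  -- conclude
  have hmem : ent (fun y => ∑ x, if fdec c x = y then p x else 0) ∈
      {r : ℝ | ∃ f : X → Y, (∀ x, 0 < p x → df x (f x) ≤ D) ∧
        r = ent (fun y => ∑ x, if f x = y then p x else 0)} :=
    ⟨fdec c, hfd c, rfl⟩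
  have hbdd : BddBelow {r : ℝ | ∃ f : X → Y, (∀ x, 0 < p x → df x (f x) ≤ D) ∧
      r = ent (fun y => ∑ x, if f x = y then p x else 0)} := by
    refine ⟨0, ?_⟩
    rintro r ⟨f, _, rfl⟩
    apply ent_nonneg
    · exact (pushforward_isPMF p hp f).1
    · intro y
      calc (∑ x, if f x = y then p x else 0) ≤ ∑ y', ∑ x, if f x = y' then p x else 0 :=
          Finset.single_le_sum (fun y' _ => (pushforward_isPMF p hp f).1 y') (Finset.mem_univ y)
        _ = 1 := (pushforward_isPMF p hp f).2
  calc sInf _ ≤ ent (fun y => ∑ x, if fdec c x = y then p x else 0) := csInf_le hbdd hmem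
    _ ≤ ∑ x, p x * (- Real.logb 2 (μ c (fdec c x))) := hgibbs c
    _ ≤ _ := le_trans hc hexp






variable {X Y : Type*} [Fintype X] [Fintype Y]

theorem main [Nonempty Y] [DecidableEq Y]
    (p : X → ℝ) (df : X → Y → ℝ) (D : ℝ) (hp : isPMF p)
    (hball : ∀ x, 0 < p x → ∃ y, df x y ≤ D)
    (Rplus : ℝ)
    (hRplus : Rplus = sInf {r : ℝ | ∃ Q : Y → ℝ, isPMF Q ∧
        (∀ x, 0 < p x → 0 < probBall Q df D x) ∧
        r = ∑ x, p x * (- Real.logb 2 (probBall Q df D x))}) :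
    sInf {r : ℝ | ∃ f : X → Y, (∀ x, 0 < p x → df x (f x) ≤ D) ∧
        r = ent (fun y => ∑ x, if f x = y then p x else 0)} ≤
      Rplus + Real.logb 2 (Rplus + 1) + Real.logb 2 (Real.exp 1) := by
  set SQ : Set ℝ := {r : ℝ | ∃ Q : Y → ℝ, isPMF Q ∧
      (∀ x, 0 < p x → 0 < probBall Q df D x) ∧
      r = ∑ x, p x * (- Real.logb 2 (probBall Q df D x))} with hSQ
  -- the uniform distribution is admissible
  have hcard : (0:ℝ) < (Fintype.card Y : ℝ) := by
    exact_mod_cast Fintype.card_pos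
  have hQ0pmf : isPMF (fun _ : Y => (Fintype.card Y : ℝ)⁻¹) := by
    constructor
    · intro y; positivity
    · rw [Finset.sum_const, Finset.card_univ, nsmul_eq_mul]
      field_simp
  have hQ0pos : ∀ x, 0 < p x →
      0 < probBall (fun _ : Y => (Fintype.card Y : ℝ)⁻¹) df D x := by
    intro x hx
    obtain ⟨y, hy⟩ := hball x hx
    have hterm : (if df x y ≤ D then (Fintype.card Y : ℝ)⁻¹ else 0)
        = (Fintype.card Y : ℝ)⁻¹ := if_pos hy
    have hsingle := Finset.single_le_sum
      (f := fun y' => if df x y' ≤ D then (Fintype.card Y : ℝ)⁻¹ else 0)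
      (fun y' _ => by split
                      · positivity
                      · exact le_refl 0)
      (Finset.mem_univ y)
    have hsingle' : (Fintype.card Y : ℝ)⁻¹
        ≤ probBall (fun _ : Y => (Fintype.card Y : ℝ)⁻¹) df D x := by
      simpa [hy, probBall] using hsingle
    calc (0:ℝ) < (Fintype.card Y : ℝ)⁻¹ := by positivity
      _ ≤ probBall (fun _ : Y => (Fintype.card Y : ℝ)⁻¹) df D x := hsingle'
  have hSQne : SQ.Nonempty :=
    ⟨_, ⟨fun _ : Y => (Fintype.card Y : ℝ)⁻¹, hQ0pmf, hQ0pos, rfl⟩⟩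
  have hSQ0 : ∀ r ∈ SQ, (0:ℝ) ≤ r := by
    rintro r ⟨Q, hQ, hQpos, rfl⟩
    apply Finset.sum_nonneg
    intro x _
    rcases eq_or_lt_of_le (hp.1 x) with h | h
    · rw [← h, zero_mul]
    · have h1 : probBall Q df D x ≤ 1 := probBall_le_one hQ df D x
      have h2 := Real.logb_nonpos one_lt_two (hQpos x h).le h1
      nlinarith
  have hRplus0 : 0 ≤ Rplus := by
    rw [hRplus]
    exact le_csInf hSQne hSQ0
  have hLe2 : (1:ℝ) ≤ Real.logb 2 (Real.exp 1) := by
    rw [Real.logb, Real.log_exp]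
    rw [le_div_iff₀ (Real.log_pos one_lt_two)]
    have := Real.log_two_lt_d9
    linarith
  -- ε-approximate claim
  have hclaim : ∀ ε : ℝ, 0 < ε →
      sInf {r : ℝ | ∃ f : X → Y, (∀ x, 0 < p x → df x (f x) ≤ D) ∧
          r = ent (fun y => ∑ x, if f x = y then p x else 0)}
        ≤ Rplus + ε + Real.logb 2 (Rplus + ε + 1) + Real.logb 2 (Real.exp 1) := by
    intro ε hε
    obtain ⟨r, hrSQ, hrlt⟩ := lt_sInf_add_pos hSQne (half_pos hε)
    rw [← hRplus] at hrlt
    have hr0 : 0 ≤ r := hSQ0 r hrSQ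
    obtain ⟨Q, hQ, hQpos, hrval⟩ := hrSQ
    have hlogmono : Real.logb 2 (r + 1) ≤ Real.logb 2 (Rplus + ε + 1) := by
      apply (Real.logb_le_logb one_lt_two (by linarith) (by linarith)).mpr
      linarith
    rcases eq_or_lt_of_le hr0 with hr | hr
    · -- r = 0 : take θ = 1/2
      have hperQ := perQ p df D hp hball Q hQ hQpos (1/2) (by norm_num) (by norm_num)
        (ε/2) (half_pos hε)
      rw [← hrval, ← hr] at hperQ
      have h12 : Real.logb 2 ((1:ℝ)/2)⁻¹ = 1 := by
        norm_num
      have h121 : ((1:ℝ) - 1/2)⁻¹ = ((1:ℝ)/2)⁻¹ := by norm_num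
      rw [h121, h12] at hperQ
      have hlog1 : 0 ≤ Real.logb 2 (Rplus + ε + 1) :=
        Real.logb_nonneg one_lt_two (by linarith)
      calc sInf _ ≤ (1 + 1) * 0 + 1 + ε/2 := hperQ
        _ ≤ Rplus + ε + Real.logb 2 (Rplus + ε + 1) + Real.logb 2 (Real.exp 1) := by
            linarith
    · -- r > 0 : take θ = r/(r+1)
      set θ : ℝ := r / (r+1) with hθ
      have hθ0 : 0 < θ := div_pos hr (by linarith)
      have hθ1 : θ < 1 := (div_lt_one (by linarith)).mpr (by linarith)
      have hperQ := perQ p df D hp hball Q hQ hQpos θ hθ0 hθ1 (ε/2) (half_pos hε)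
      rw [← hrval] at hperQ
      have hθinv : θ⁻¹ = (r+1)/r := by rw [hθ, inv_div]
      have h1θ : (1 - θ)⁻¹ = r + 1 := by
        rw [hθ]
        have : (1:ℝ) - r/(r+1) = (r+1)⁻¹ := by
          field_simp; ring
        rw [this, inv_inv]
      have hlogθ : Real.logb 2 θ⁻¹ = Real.logb 2 (r+1) - Real.logb 2 r := by
        rw [hθinv, Real.logb_div (by linarith) (ne_of_gt hr)]
      have hmid : r * (Real.logb 2 (r+1) - Real.logb 2 r) ≤ Real.logb 2 (Real.exp 1) := by
        have hdivpos : (0:ℝ) < (r+1)/r := by positivity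
        have hlogle : Real.log ((r+1)/r) ≤ 1/r := by
          have h := Real.log_le_sub_one_of_pos hdivpos
          have : (r+1)/r - 1 = 1/r := by field_simp; ring
          linarith [this ▸ h]
        have hcomb : Real.logb 2 (r+1) - Real.logb 2 r = Real.logb 2 ((r+1)/r) :=
          (Real.logb_div (by linarith) (ne_of_gt hr)).symm
        rw [hcomb, Real.logb, Real.logb, Real.log_exp]
        have hl2 : (0:ℝ) < Real.log 2 := Real.log_pos one_lt_two
        have hr1 : r * Real.log ((r+1)/r) ≤ 1 := by
          calc r * Real.log ((r+1)/r) ≤ r * (1/r) := by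
                exact mul_le_mul_of_nonneg_left hlogle hr.le
            _ = 1 := by field_simp
        calc r * (Real.log ((r+1)/r) / Real.log 2)
            = (r * Real.log ((r+1)/r)) / Real.log 2 := by ring
          _ ≤ 1 / Real.log 2 := by gcongr
      rw [hlogθ, h1θ] at hperQ
      calc sInf _ ≤ (1 + (Real.logb 2 (r+1) - Real.logb 2 r)) * r
            + Real.logb 2 (r+1) + ε/2 := hperQ
        _ = r + r * (Real.logb 2 (r+1) - Real.logb 2 r) + Real.logb 2 (r+1) + ε/2 := by
            ring
        _ ≤ Rplus + ε + Real.logb 2 (Rplus + ε + 1) + Real.logb 2 (Real.exp 1) := by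
            linarith
  -- pass to the limit ε → 0⁺
  have hcont : ContinuousAt (fun ε : ℝ =>
      Rplus + ε + Real.logb 2 (Rplus + ε + 1) + Real.logb 2 (Real.exp 1)) 0 := by
    apply ContinuousAt.add
    apply ContinuousAt.add
    · exact (continuous_const.add continuous_id).continuousAt
    · have hf : ContinuousAt (fun ε : ℝ => Rplus + ε + 1) 0 :=
        ((continuous_const.add continuous_id).add continuous_const).continuousAt
      have h1 : ContinuousAt (fun ε : ℝ => Real.log (Rplus + ε + 1)) 0 :=
        hf.log (by intro h; linarith)
      simp only [Real.logb]
      exact h1.div_const _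
    · exact continuousAt_const
  have htend : Filter.Tendsto (fun ε : ℝ =>
      Rplus + ε + Real.logb 2 (Rplus + ε + 1) + Real.logb 2 (Real.exp 1))
      (nhdsWithin 0 (Set.Ioi 0))
      (nhds (Rplus + Real.logb 2 (Rplus + 1) + Real.logb 2 (Real.exp 1))) := by
    have h2 := hcont.tendsto.mono_left (nhdsWithin_le_nhds (s := Set.Ioi (0:ℝ)))
    simpa using h2
  apply ge_of_tendsto htend
  apply eventually_nhdsWithin_of_forall
  intro ε hε
  exact hclaim ε hε


end GEUB

/-- single-shot achievability
`H_X(d,0) ≤ R_X⁺(d,0) + log₂(R_X⁺(d,0) + 1) + log₂ e` bits, where `H_X(d,0)` is the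
minimal output entropy of a deterministic quantizer meeting distortion `D` a.s. and
`R_X⁺(d,0) = inf_Q E[-log₂ Q(B_D(X))]`. -/
theorem guaranteed_entropy_upper_bound {X Y : Type*} [Fintype X] [Fintype Y]
    [Nonempty Y] [DecidableEq Y]
    (p : X → ℝ) (df : X → Y → ℝ) (D : ℝ) (hp : isPMF p)
    (hball : ∀ x, 0 < p x → ∃ y, df x y ≤ D)
    (Rplus : ℝ)
    (hRplus : Rplus = sInf {r : ℝ | ∃ Q : Y → ℝ, isPMF Q ∧
        (∀ x, 0 < p x → 0 < probBall Q df D x) ∧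
        r = ∑ x, p x * (- Real.logb 2 (probBall Q df D x))}) :
    sInf {r : ℝ | ∃ f : X → Y, (∀ x, 0 < p x → df x (f x) ≤ D) ∧
        r = ent (fun y => ∑ x, if f x = y then p x else 0)} ≤
      Rplus + Real.logb 2 (Rplus + 1) + Real.logb 2 (Real.exp 1) :=
  GEUB.main p df D hp hball Rplus hRplus
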